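/- For all real numbers a > 0 and b > 0, the two six-point configurations in ℝ³ given by X_L(a,b) = ((0,0,b), (0,0,−b), (a,a,a), (a,a,−a), (−a,−a,a), (−a,−a,−a)) and X_R(a,b) = ((0,0,b), (0,0,−b), (a,a,a), (−a,a,a), (a,−a,−a), (−a,−a,−a)) are not congruent: there is no permutation σ of Fin 6 such that dist (X_L i) (X_L j) = dist (X_R (σ i)) (X_R (σ j)) for all i, j. (X_L consists of two opposite vertices of a regular octahedron together with four coplanar cube vertices — all six points lie on the plane x = y — while in X_R the six points are not coplanar.) -/

import Mathlib

/-- The left configuration `X_L(a,b)`: two opposite vertices of a regular octahedron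
together with four coplanar cube vertices (all six points lie on the plane `x = y`). -/
noncomputable def XL (a b : ℝ) : Fin 6 → EuclideanSpace ℝ (Fin 3) :=
  ![!₂[0, 0, b], !₂[0, 0, -b], !₂[a, a, a], !₂[a, a, -a], !₂[-a, -a, a], !₂[-a, -a, -a]]

/-- The right configuration `X_R(a,b)`: two opposite vertices of a regular octahedron
together with four non-coplanar cube vertices. -/
noncomputable def XR (a b : ℝ) : Fin 6 → EuclideanSpace ℝ (Fin 3) :=
  ![!₂[0, 0, b], !₂[0, 0, -b], !₂[a, a, a], !₂[-a, a, a], !₂[a, -a, -a], !₂[-a, -a, -a]]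

/-- Squared distance in `EuclideanSpace ℝ (Fin 3)` in coordinates. -/
lemma distsq3 (p q : EuclideanSpace ℝ (Fin 3)) :
    dist p q ^ 2 = (p 0 - q 0) ^ 2 + (p 1 - q 1) ^ 2 + (p 2 - q 2) ^ 2 := by
  rw [EuclideanSpace.dist_eq, Real.sq_sqrt (Finset.sum_nonneg fun i _ => sq_nonneg _)]
  simp [Fin.sum_univ_three, Real.dist_eq, sq_abs]

/-- Gram determinant of a 4-point configuration expressed through the six
squared pairwise distances. -/
noncomputable def gram (D01 D02 D03 D12 D13 D23 : ℝ) : ℝ :=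
  D01 * (D02 * D03 - ((D02 + D03 - D23) / 2) ^ 2)
    - ((D01 + D02 - D12) / 2) *
        (((D01 + D02 - D12) / 2) * D03 - ((D02 + D03 - D23) / 2) * ((D01 + D03 - D13) / 2))
    + ((D01 + D03 - D13) / 2) *
        (((D01 + D02 - D12) / 2) * ((D02 + D03 - D23) / 2) - D02 * ((D01 + D03 - D13) / 2))

/-- Planar points (here: with first two coordinates of the form `(s,s)`)
have vanishing Gram determinant. -/
lemma gram_planar (s0 s1 s2 s3 t0 t1 t2 t3 : ℝ) :
    gram (2*(s0-s1)^2+(t0-t1)^2) (2*(s0-s2)^2+(t0-t2)^2) (2*(s0-s3)^2+(t0-t3)^2)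
      (2*(s1-s2)^2+(t1-t2)^2) (2*(s1-s3)^2+(t1-t3)^2) (2*(s2-s3)^2+(t2-t3)^2) = 0 := by
  simp only [gram]; ring

lemma gram_XR (a b : ℝ) :
    gram (4*b^2) (2*a^2+(a-b)^2) (2*a^2+(a-b)^2) (2*a^2+(a+b)^2) (2*a^2+(a+b)^2) (4*a^2)
      = 16 * a^4 * b^2 := by
  simp only [gram]; ring

/-- For all `a, b > 0`, the six-point configurations `X_L(a,b)` and
`X_R(a,b)` are not congruent: no permutation of the indices matches all pairwise
distances. -/
theorem XL_XR_not_congruent (a b : ℝ) (ha : 0 < a) (hb : 0 < b) :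
    ¬ ∃ σ : Equiv.Perm (Fin 6),
        ∀ i j, dist (XL a b i) (XL a b j) = dist (XR a b (σ i)) (XR a b (σ j)) := by
  rintro ⟨σ, h⟩
  -- all points of XL have equal first two coordinates
  have hxy : ∀ i : Fin 6, XL a b i 1 = XL a b i 0 := by
    intro i; fin_cases i <;> norm_num [XL, Matrix.cons_val_succ]
  have key : ∀ i j : Fin 6, dist (XL a b i) (XL a b j) ^ 2 =
      2 * (XL a b i 0 - XL a b j 0) ^ 2 + (XL a b i 2 - XL a b j 2) ^ 2 := by
    intro i j; rw [distsq3, hxy i, hxy j]; ring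
  -- matched distances
  have hd : ∀ k l : Fin 6, dist (XL a b (σ.symm k)) (XL a b (σ.symm l)) ^ 2
      = dist (XR a b k) (XR a b l) ^ 2 := by
    intro k l
    have := h (σ.symm k) (σ.symm l)
    simpa only [Equiv.apply_symm_apply] using congrArg (· ^ 2) this
  -- squared distances of XR on indices 0,1,2,3
  have e01 : dist (XR a b 0) (XR a b 1) ^ 2 = 4*b^2 := by rw [distsq3]; simp [XR]; ring
  have e02 : dist (XR a b 0) (XR a b 2) ^ 2 = 2*a^2+(a-b)^2 := by rw [distsq3]; simp [XR]; ring
  have e03 : dist (XR a b 0) (XR a b 3) ^ 2 = 2*a^2+(a-b)^2 := by rw [distsq3]; simp [XR]; ring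
  have e12 : dist (XR a b 1) (XR a b 2) ^ 2 = 2*a^2+(a+b)^2 := by rw [distsq3]; simp [XR]; ring
  have e13 : dist (XR a b 1) (XR a b 3) ^ 2 = 2*a^2+(a+b)^2 := by rw [distsq3]; simp [XR]; ring
  have e23 : dist (XR a b 2) (XR a b 3) ^ 2 = 4*a^2 := by rw [distsq3]; simp [XR]; ring
  -- coordinates of the matching XL points
  set s0 : ℝ := XL a b (σ.symm 0) 0
  set s1 : ℝ := XL a b (σ.symm 1) 0
  set s2 : ℝ := XL a b (σ.symm 2) 0
  set s3 : ℝ := XL a b (σ.symm 3) 0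
  set t0 : ℝ := XL a b (σ.symm 0) 2
  set t1 : ℝ := XL a b (σ.symm 1) 2
  set t2 : ℝ := XL a b (σ.symm 2) 2
  set t3 : ℝ := XL a b (σ.symm 3) 2
  have E01 : 2*(s0-s1)^2+(t0-t1)^2 = 4*b^2 := by
    rw [← key (σ.symm 0) (σ.symm 1), hd 0 1, e01]
  have E02 : 2*(s0-s2)^2+(t0-t2)^2 = 2*a^2+(a-b)^2 := by
    rw [← key (σ.symm 0) (σ.symm 2), hd 0 2, e02]
  have E03 : 2*(s0-s3)^2+(t0-t3)^2 = 2*a^2+(a-b)^2 := by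
    rw [← key (σ.symm 0) (σ.symm 3), hd 0 3, e03]
  have E12 : 2*(s1-s2)^2+(t1-t2)^2 = 2*a^2+(a+b)^2 := by
    rw [← key (σ.symm 1) (σ.symm 2), hd 1 2, e12]
  have E13 : 2*(s1-s3)^2+(t1-t3)^2 = 2*a^2+(a+b)^2 := by
    rw [← key (σ.symm 1) (σ.symm 3), hd 1 3, e13]
  have E23 : 2*(s2-s3)^2+(t2-t3)^2 = 4*a^2 := by
    rw [← key (σ.symm 2) (σ.symm 3), hd 2 3, e23]
  have hzero := gram_planar s0 s1 s2 s3 t0 t1 t2 t3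
  rw [E01, E02, E03, E12, E13, E23, gram_XR] at hzero
  exact absurd hzero (by positivity : (0:ℝ) < 16 * a ^ 4 * b ^ 2).ne'
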